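/- For any binary De Bruijn sequence s of order k ≥ 4 (which has length n = 2^k), f(s) ≥ (n − log₂ n)/log₂ n. -/

import Mathlib

/-- A tandem duplication: `x = a ++ b ++ c` becomes `y = a ++ b ++ b ++ c` with `b` nonempty. -/
def Dup (x y : List Bool) : Prop :=
  ∃ a b c : List Bool, b ≠ [] ∧ x = a ++ b ++ c ∧ y = a ++ (b ++ b) ++ c

/-- `DupSteps k x y` : `y` is obtained from `x` by exactly `k` tandem duplications. -/
def DupSteps : ℕ → List Bool → List Bool → Prop
  | 0 => fun x y => x = y
  | k + 1 => fun x y => ∃ z, Dup x z ∧ DupSteps k z y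

/-- A binary sequence is square-free if it contains no nonempty factor of the form `b ++ b`. -/
def SqFree (s : List Bool) : Prop :=
  ¬ ∃ a b c : List Bool, b ≠ [] ∧ s = a ++ (b ++ b) ++ c

/-- Duplication distance from `s` to its (square-free) root. -/
noncomputable def ddist (s : List Bool) : ℕ :=
  sInf {k | ∃ r : List Bool, SqFree r ∧ DupSteps k r s}

/-- `fmax n` : maximum duplication distance to the root over binary sequences of length `n`. -/
noncomputable def fmax (n : ℕ) : ℕ :=
  sSup (ddist '' {s : List Bool | s.length = n})

/-- A binary De Bruijn sequence of order `k`: it has length `2^k` and, viewed cyclically,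
contains every binary sequence of length `k` as a substring exactly once. -/
def DeBruijn (k : ℕ) (s : List Bool) : Prop :=
  s.length = 2 ^ k ∧
    ∀ w : List Bool, w.length = k →
      ∃! i : Fin s.length, w = ((s ++ s).drop (i : ℕ)).take k

/-- the set of length-`k` windows of `x` -/
def Win (k : ℕ) (x : List Bool) : Finset (List Bool) :=
  ((Finset.range x.length).image (fun i => (x.drop i).take k)).filter (fun w => w.length = k)

lemma mem_win {k : ℕ} {x w : List Bool} :
    w ∈ Win k x ↔ (∃ i < x.length, (x.drop i).take k = w) ∧ w.length = k := by
  simp [Win]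

lemma window_prefix {p q : List Bool} (i k : ℕ) (h : i + k ≤ p.length) :
    ((p ++ q).drop i).take k = (p.drop i).take k := by
  rw [List.drop_append_of_le_length (by omega), List.take_append_of_le_length (by simp; omega)]

lemma window_suffix (p q : List Bool) (i : ℕ) (h : p.length ≤ i) :
    (p ++ q).drop i = q.drop (i - p.length) := by
  rw [List.drop_append, List.drop_eq_nil_of_le h, List.nil_append]

lemma dup_win {k : ℕ} (hk : 0 < k) {x y : List Bool} (h : Dup x y) :
    (Win k y).card ≤ (Win k x).card + k := by
  obtain ⟨a, b, c, hb, hx, hy⟩ := h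
  have hlb : 0 < b.length := List.length_pos_iff.mpr hb
  have hxlen : x.length = a.length + b.length + c.length := by simp [hx]; omega
  have hylen : y.length = a.length + b.length + b.length + c.length := by simp [hy]; omega
  have hx2 : x = a ++ (b ++ c) := by rw [hx, List.append_assoc]
  have hy2 : y = (a ++ b) ++ (b ++ c) := by rw [hy]; simp
  set E : Finset (List Bool) :=
    (Finset.Ico (a.length + b.length + 1 - k) (a.length + b.length)).image
      (fun i => (y.drop i).take k) with hE
  have hsub : Win k y ⊆ Win k x ∪ E := by
    intro w hw
    rw [mem_win] at hw
    obtain ⟨⟨i, hi, hwi⟩, hwl⟩ := hw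
    rcases le_or_gt (i + k) (a.length + b.length) with hcase | hcase
    · -- window inside the common prefix a ++ b
      refine Finset.mem_union_left _ (mem_win.mpr ⟨⟨i, by omega, ?_⟩, hwl⟩)
      calc (x.drop i).take k
          = ((a ++ b).drop i).take k := by
            rw [hx]; exact window_prefix i k (by simp; omega)
        _ = (y.drop i).take k := by
            rw [hy2]; exact (window_prefix i k (by simp; omega)).symm
        _ = w := hwi
    · rcases le_or_gt (a.length + b.length) i with hcase2 | hcase2
      · -- window inside the suffix b ++ c
        refine Finset.mem_union_left _ (mem_win.mpr ⟨⟨i - b.length, by omega, ?_⟩, hwl⟩)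
        have e1 : x.drop (i - b.length) = (b ++ c).drop (i - b.length - a.length) := by
          rw [hx2]; exact window_suffix a (b ++ c) _ (by omega)
        have e2 : y.drop i = (b ++ c).drop (i - (a.length + b.length)) := by
          rw [hy2, window_suffix (a ++ b) (b ++ c) i (by simp; omega)]
          congr 1
          simp
        rw [e1, ← hwi, e2]
        congr 2
        omega
      · -- crossing window
        refine Finset.mem_union_right _ ?_
        rw [hE]
        simp only [Finset.mem_image, Finset.mem_Ico]
        exact ⟨i, ⟨by omega, by omega⟩, hwi⟩
  calc (Win k y).card ≤ (Win k x ∪ E).card := Finset.card_le_card hsub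
    _ ≤ (Win k x).card + E.card := Finset.card_union_le _ _
    _ ≤ (Win k x).card + k := by
        have h1 := Finset.card_image_le
          (s := Finset.Ico (a.length + b.length + 1 - k) (a.length + b.length))
          (f := fun i => (y.drop i).take k)
        rw [Nat.card_Ico] at h1
        rw [hE]
        omega

lemma steps_win {k : ℕ} (hk : 0 < k) :
    ∀ (m : ℕ) (x y : List Bool), DupSteps m x y → (Win k y).card ≤ (Win k x).card + m * k := by
  intro m
  induction m with
  | zero => intro x y h; cases h; simp
  | succ n ih =>
    intro x y h
    obtain ⟨z, hz, hzy⟩ := h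
    have h1 := ih z y hzy
    have h2 := dup_win hk hz
    calc (Win k y).card ≤ (Win k z).card + n * k := h1
      _ ≤ (Win k x).card + k + n * k := by omega
      _ = (Win k x).card + (n + 1) * k := by ring

lemma dupsteps_snoc : ∀ (m : ℕ) (x y z : List Bool),
    DupSteps m x y → Dup y z → DupSteps (m + 1) x z := by
  intro m
  induction m with
  | zero => intro x y z h hd; cases h; exact ⟨z, hd, rfl⟩
  | succ n ih =>
    intro x y z h hd
    obtain ⟨w, hw, hwy⟩ := h
    exact ⟨w, hw, ih w y z hwy hd⟩

lemma exists_root (s : List Bool) : ∃ m r, SqFree r ∧ DupSteps m r s := by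
  by_cases hs : SqFree s
  · exact ⟨0, s, hs, rfl⟩
  · rw [SqFree, not_not] at hs
    obtain ⟨a, b, c, hb, hsum⟩ := hs
    have hlt : (a ++ b ++ c).length < s.length := by
      have hlb : 0 < b.length := List.length_pos_iff.mpr hb
      simp [hsum]
      omega
    obtain ⟨m, r, hr, hst⟩ := exists_root (a ++ b ++ c)
    exact ⟨m + 1, r, hr, dupsteps_snoc m r _ s hst ⟨a, b, c, hb, rfl, hsum⟩⟩
termination_by s.length
decreasing_by simpa using hlt

lemma sqfree_len {r : List Bool} (h : SqFree r) : r.length ≤ 3 := by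
  by_contra hlen
  push_neg at hlen
  apply h
  match r, hlen with
  | a :: b :: c :: d :: t, _ =>
    by_cases hab : a = b
    · exact ⟨[], [a], c :: d :: t, by simp, by simp [hab]⟩
    · by_cases hbc : b = c
      · exact ⟨[a], [b], d :: t, by simp, by simp [hbc]⟩
      · by_cases hcd : c = d
        · exact ⟨[a, b], [c], t, by simp, by simp [hcd]⟩
        · have hca : c = a := by revert hab hbc; cases a <;> cases b <;> cases c <;> simp
          have hdb : d = b := by revert hbc hcd; cases b <;> cases c <;> cases d <;> simp
          exact ⟨[], [a, b], t, by simp, by simp [hca, hdb]⟩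

lemma win_card_root {k : ℕ} {r : List Bool} (hkr : r.length < k) : (Win k r).card = 0 := by
  rw [Finset.card_eq_zero]
  ext w
  simp only [Finset.notMem_empty, iff_false]
  intro hw
  rw [mem_win] at hw
  obtain ⟨⟨i, hi, hwi⟩, hwl⟩ := hw
  have hcongr := congrArg List.length hwi
  rw [List.length_take, List.length_drop, hwl] at hcongr
  omega

lemma debruijn_win_card {k : ℕ} (hk : 0 < k) {s : List Bool} (hs : DeBruijn k s) :
    2 ^ k + 1 ≤ (Win k s).card + k := by
  obtain ⟨hlen, huniq⟩ := hs
  have hkn : k ≤ 2 ^ k := Nat.le_of_lt (Nat.lt_two_pow_self)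
  have hinj : Set.InjOn (fun i => (s.drop i).take k) (Finset.range (2 ^ k + 1 - k)) := by
    intro i hi j hj hij
    simp only [Finset.coe_range, Set.mem_Iio] at hi hj
    have hwin : ∀ m : ℕ, m < 2 ^ k + 1 - k →
        ((s ++ s).drop m).take k = (s.drop m).take k := by
      intro m hm
      exact window_prefix m k (by rw [hlen]; omega)
    have hws : ((s.drop i).take k).length = k := by
      rw [List.length_take, List.length_drop, hlen]; omega
    obtain ⟨io, hio, hio2⟩ := huniq ((s.drop i).take k) hws
    have e1 : (⟨i, by omega⟩ : Fin s.length) = io := by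
      apply hio2; exact (hwin i hi).symm
    have e2 : (⟨j, by omega⟩ : Fin s.length) = io := by
      apply hio2
      have hij' : (s.drop i).take k = (s.drop j).take k := hij
      exact hij'.trans (hwin j hj).symm
    have := e1.trans e2.symm
    simpa using this
  have hmaps : ∀ i ∈ Finset.range (2 ^ k + 1 - k), (s.drop i).take k ∈ Win k s := by
    intro i hi
    simp only [Finset.mem_range] at hi
    rw [mem_win]
    refine ⟨⟨i, by omega, rfl⟩, ?_⟩
    rw [List.length_take, List.length_drop, hlen]; omega
  have := Finset.card_le_card_of_injOn _ hmaps hinj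
  rw [Finset.card_range] at this
  omega

theorem deBruijn_lower_bound (k : ℕ) (hk : 4 ≤ k) (s : List Bool) (hs : DeBruijn k s) :
    (((2 : ℝ) ^ k) - Real.logb 2 ((2 : ℝ) ^ k)) / Real.logb 2 ((2 : ℝ) ^ k) ≤ ddist s := by
  have hk0 : 0 < k := by omega
  have hne : {m | ∃ r : List Bool, SqFree r ∧ DupSteps m r s}.Nonempty := by
    obtain ⟨m, r, hr, hst⟩ := exists_root s
    exact ⟨m, r, hr, hst⟩
  have hmem : ∃ r : List Bool, SqFree r ∧ DupSteps (ddist s) r s := Nat.sInf_mem hne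
  obtain ⟨r, hr, hst⟩ := hmem
  have hcount : 2 ^ k + 1 ≤ (Win k s).card + k := debruijn_win_card hk0 hs
  have hroot : (Win k r).card = 0 :=
    win_card_root (lt_of_le_of_lt (sqfree_len hr) (by omega))
  have hsteps := steps_win hk0 (ddist s) r s hst
  have key : 2 ^ k + 1 ≤ ddist s * k + k := by omega
  have hlogb : Real.logb 2 ((2 : ℝ) ^ k) = k := by
    rw [Real.logb_pow, Real.logb_self_eq_one, mul_one]; norm_num
  rw [hlogb, div_le_iff₀ (by positivity : (0 : ℝ) < (k : ℝ))]
  have hcast : ((2 : ℝ) ^ k) + 1 ≤ (ddist s : ℝ) * k + k := by exact_mod_cast key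
  have hknn : (0 : ℝ) ≤ (k : ℝ) := by positivity
  linarith
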